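/- Let 𝔸 = (A, ≤, →, Σ) be an implicative algebra with |A| < κ for a strongly inaccessible cardinal κ, and let W, ∈_W, =_W and the interpretation ‖·‖ be as defined below. Writing x ⊆ y for the formula ∀z(z ∈ x → z ∈ y): ‖x ⊆ y [x, y]‖ ≡_{Σ[W²]} the function (α, β) ↦ α ⊆_W β. -/

import Mathlib

universe u

local infixl:65 " ♯ " => max

/-- An implicative algebra `𝔸 = (A, ≤, →, Σ)`:  a complete lattice `(A, ≤)` together with an
implication `imp` which is antitone in its first argument, monotone in its second argument and
turns infima in the second argument into infima, and a separator `Sig ⊆ A` which is upward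
closed, closed under modus ponens and contains the combinators `K` and `S`. -/
structure ImplicativeAlgebra (A : Type u) [CompleteLattice A] where
  imp : A → A → A
  imp_antitone : ∀ ⦃a a' b : A⦄, a ≤ a' → imp a' b ≤ imp a b
  imp_monotone : ∀ ⦃a b b' : A⦄, b ≤ b' → imp a b ≤ imp a b'
  imp_sInf : ∀ (a : A) (S : Set A), imp a (sInf S) = ⨅ b ∈ S, imp a b
  Sig : Set A
  Sig_upward : ∀ ⦃a b : A⦄, a ∈ Sig → a ≤ b → b ∈ Sig
  Sig_mp : ∀ ⦃a b : A⦄, imp a b ∈ Sig → a ∈ Sig → b ∈ Sig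
  Sig_K : (⨅ a : A, ⨅ b : A, imp a (imp b a)) ∈ Sig
  Sig_S : (⨅ a : A, ⨅ b : A, ⨅ c : A,
      imp (imp a (imp b c)) (imp (imp a b) (imp a c))) ∈ Sig

namespace ImplicativeAlgebra

variable {A : Type u} [CompleteLattice A]

/-- `a × b := ⨅ x, ((a → (b → x)) → x)`. -/
def times (IA : ImplicativeAlgebra A) (a b : A) : A :=
  ⨅ x : A, IA.imp (IA.imp a (IA.imp b x)) x

/-- `a + b := ⨅ x, ((a → x) → ((b → x) → x))`. -/
def plus (IA : ImplicativeAlgebra A) (a b : A) : A :=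
  ⨅ x : A, IA.imp (IA.imp a x) (IA.imp (IA.imp b x) x)

/-- `∃⃗_{i} f i := ⨅ x, ((⨅ i, (f i → x)) → x)`.  (`∀⃗` is just `⨅`.) -/
def aex (IA : ImplicativeAlgebra A) {ι : Sort*} (f : ι → A) : A :=
  ⨅ x : A, IA.imp (⨅ i, IA.imp (f i) x) x

/-- `φ ⊢_{Σ[I]} ψ` iff `⨅ i, (φ i → ψ i) ∈ Σ`. -/
def SigLe (IA : ImplicativeAlgebra A) {ι : Sort*} (f g : ι → A) : Prop :=
  (⨅ i, IA.imp (f i) (g i)) ∈ IA.Sig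

/-- `φ ≡_{Σ[I]} ψ` iff `φ ⊢_{Σ[I]} ψ` and `ψ ⊢_{Σ[I]} φ`. -/
def SigEquiv (IA : ImplicativeAlgebra A) {ι : Sort*} (f g : ι → A) : Prop :=
  IA.SigLe f g ∧ IA.SigLe g f

end ImplicativeAlgebra

/-- Pre-elements of the cumulative hierarchy of partial functions valued in `A`:
an element is an `A`-labelled family of previously constructed elements, i.e. a partial
function (presented by a family indexed by its domain) from earlier elements to `A`. -/
inductive PreW (A : Type u) : Type (u + 1)
  | mk (ι : Type u) (fam : ι → PreW A) (val : ι → A)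

namespace PreW

variable {A : Type u}

/-- The (index type of the) domain of a partial function. -/
def dom : PreW A → Type u
  | ⟨ι, _, _⟩ => ι

/-- The family of elements of the domain. -/
def fam : (w : PreW A) → w.dom → PreW A
  | ⟨_, f, _⟩ => f

/-- The values in `A` of the partial function. -/
def val : (w : PreW A) → w.dom → A
  | ⟨_, _, v⟩ => v

/-- `w` is hereditarily of size `< κ`:  this carves out exactly the elements of the stage
`W_κ` of the hierarchy (for `κ` inaccessible). -/
def HSmall (κ : Cardinal.{u}) : PreW A → Prop
  | ⟨ι, f, _⟩ => Cardinal.mk ι < κ ∧ ∀ i, HSmall κ (f i)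

theorem HSmall.fam {κ : Cardinal.{u}} :
    ∀ {w : PreW A}, w.HSmall κ → ∀ i : w.dom, (w.fam i).HSmall κ
  | ⟨_, _, _⟩, h, i => h.2 i

/-- The rank of an element of the hierarchy. -/
noncomputable def rank : PreW A → Ordinal.{u}
  | ⟨_, f, _⟩ => ⨆ i, Order.succ (rank (f i))

theorem rank_lt_mk {ι : Type u} (f : ι → PreW A) (v : ι → A) (i : ι) :
    (f i).rank < (PreW.mk ι f v).rank := by
  have h : Order.succ (f i).rank ≤ ⨆ j, Order.succ (f j).rank := Ordinal.le_iSup _ i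
  have : (f i).rank < ⨆ j, Order.succ (f j).rank :=
    lt_of_lt_of_le (Order.lt_succ _) h
  simpa [rank] using this

end PreW

namespace ImplicativeAlgebra

variable {A : Type u} [CompleteLattice A]

/-- `α =_W β`, defined by recursion on rank:
`α =_W β := (α ⊆_W β) × (β ⊆_W α)` where
`α ⊆_W β := ∀⃗_{t ∈ dom α} (α t → (fam α t ∈_W β))` and
`γ ∈_W β := ∃⃗_{s ∈ dom β} (β s × (fam β s =_W γ))`. -/
noncomputable def eqW (IA : ImplicativeAlgebra A) : PreW A → PreW A → A
  | ⟨ι₁, f₁, v₁⟩, ⟨ι₂, f₂, v₂⟩ =>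
    IA.times
      (⨅ t : ι₁, IA.imp (v₁ t)
        (IA.aex fun s : ι₂ => IA.times (v₂ s) (IA.eqW (f₂ s) (f₁ t))))
      (⨅ t : ι₂, IA.imp (v₂ t)
        (IA.aex fun s : ι₁ => IA.times (v₁ s) (IA.eqW (f₁ s) (f₂ t))))
termination_by α β => max α.rank β.rank
decreasing_by
  · exact max_lt (lt_of_lt_of_le (PreW.rank_lt_mk f₂ v₂ s) (le_max_right _ _))
      (lt_of_lt_of_le (PreW.rank_lt_mk f₁ v₁ t) (le_max_left _ _))
  · exact max_lt (lt_of_lt_of_le (PreW.rank_lt_mk f₁ v₁ s) (le_max_left _ _))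
      (lt_of_lt_of_le (PreW.rank_lt_mk f₂ v₂ t) (le_max_right _ _))

/-- `α ∈_W β := ∃⃗_{s ∈ dom β} (β s × (fam β s =_W α))`. -/
noncomputable def memW (IA : ImplicativeAlgebra A) (α β : PreW A) : A :=
  IA.aex fun s : β.dom => IA.times (β.val s) (IA.eqW (β.fam s) α)

/-- `α ⊆_W β := ∀⃗_{t ∈ dom α} (α t → (fam α t ∈_W β))`. -/
noncomputable def subW (IA : ImplicativeAlgebra A) (α β : PreW A) : A :=
  ⨅ t : α.dom, IA.imp (α.val t) (IA.memW (α.fam t) β)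

end ImplicativeAlgebra

/-- The stage `W = W_κ` of the hierarchy: all hereditarily `< κ`-sized elements. -/
def WSet (A : Type u) (κ : Cardinal.{u}) : Type (u + 1) :=
  {w : PreW A // w.HSmall κ}

/-- An element of the domain of `w ∈ W`, as an element of `W`. -/
def WSet.fam {A : Type u} {κ : Cardinal.{u}} (w : WSet A κ) (i : w.1.dom) : WSet A κ :=
  ⟨w.1.fam i, w.2.fam i⟩

/-- Formulas (in context of length `n`) of the first-order language of set theory, with
(de Bruijn-style) variables `Fin n`, binary predicates `∈` and `=`, connectives `⊥`, `∧`, `∨`,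
`→` and quantifiers `∃`, `∀` (binding the last variable of the enlarged context). -/
inductive SetFormula : ℕ → Type
  | bot {n : ℕ} : SetFormula n
  | mem {n : ℕ} (i j : Fin n) : SetFormula n
  | eq {n : ℕ} (i j : Fin n) : SetFormula n
  | and {n : ℕ} (φ ψ : SetFormula n) : SetFormula n
  | or {n : ℕ} (φ ψ : SetFormula n) : SetFormula n
  | imp {n : ℕ} (φ ψ : SetFormula n) : SetFormula n
  | ex {n : ℕ} (φ : SetFormula (n + 1)) : SetFormula n
  | all {n : ℕ} (φ : SetFormula (n + 1)) : SetFormula n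

namespace SetFormula

/-- Renaming of variables (since the only terms of the language of set theory are variables,
substitution is a special case). -/
def rename : {n m : ℕ} → (Fin n → Fin m) → SetFormula n → SetFormula m
  | _, _, _, .bot => .bot
  | _, _, f, .mem i j => .mem (f i) (f j)
  | _, _, f, .eq i j => .eq (f i) (f j)
  | _, _, f, .and φ ψ => .and (φ.rename f) (ψ.rename f)
  | _, _, f, .or φ ψ => .or (φ.rename f) (ψ.rename f)
  | _, _, f, .imp φ ψ => .imp (φ.rename f) (ψ.rename f)
  | _, _, f, .ex φ => .ex (φ.rename (Fin.snoc (Fin.castSucc ∘ f) (Fin.last _)))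
  | _, _, f, .all φ => .all (φ.rename (Fin.snoc (Fin.castSucc ∘ f) (Fin.last _)))

/-- Universal closure `∀x₁ … ∀xₙ φ` of a formula in context of length `n`. -/
def allClose : {n : ℕ} → SetFormula n → SetFormula 0
  | 0, φ => φ
  | _ + 1, φ => allClose (.all φ)

end SetFormula

namespace ImplicativeAlgebra

variable {A : Type u} [CompleteLattice A]

/-- The interpretation `‖φ[x₁,…,xₙ]‖ : Wⁿ → A` of a formula in context, by recursion on the
structure of `φ`:  atomic formulas are interpreted by `∈_W` and `=_W`, `∧` by `×`, `∨` by `+`,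
`→` by `→`, `∃` by `∃⃗` over `W` and `∀` by `∀⃗` (i.e. `⨅`) over `W`. -/
noncomputable def interp (IA : ImplicativeAlgebra A) (κ : Cardinal.{u}) :
    {n : ℕ} → SetFormula n → (Fin n → WSet A κ) → A
  | _, .bot, _ => ⊥
  | _, .mem i j, v => IA.memW (v i).1 (v j).1
  | _, .eq i j, v => IA.eqW (v i).1 (v j).1
  | _, .and φ ψ, v => IA.times (IA.interp κ φ v) (IA.interp κ ψ v)
  | _, .or φ ψ, v => IA.plus (IA.interp κ φ v) (IA.interp κ ψ v)
  | _, .imp φ ψ, v => IA.imp (IA.interp κ φ v) (IA.interp κ ψ v)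
  | _, .ex φ, v => IA.aex fun β : WSet A κ => IA.interp κ φ (Fin.snoc v β)
  | _, .all φ, v => ⨅ β : WSet A κ, IA.interp κ φ (Fin.snoc v β)

end ImplicativeAlgebra


section Dev
namespace ImplicativeAlgebra

variable {A : Type u} [CompleteLattice A] (IA : ImplicativeAlgebra A)

/-- Application in an implicative algebra. -/
def app (a b : A) : A := sInf {c | a ≤ IA.imp b c}

/-- Semantic λ-abstraction. -/
def lam (f : A → A) : A := ⨅ a : A, IA.imp a (f a)

theorem app_le {a b c : A} (h : a ≤ IA.imp b c) : IA.app a b ≤ c := sInf_le h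

theorem le_imp_app (a b : A) : a ≤ IA.imp b (IA.app a b) := by
  rw [app, IA.imp_sInf]
  exact le_iInf fun c => le_iInf fun hc => hc

theorem app_le_of {f x X Y : A} (hf : f ≤ IA.imp X Y) (hx : x ≤ X) :
    IA.app f x ≤ Y :=
  IA.app_le (hf.trans (IA.imp_antitone hx))

theorem app_mono {a a' b b' : A} (ha : a ≤ a') (hb : b ≤ b') :
    IA.app a b ≤ IA.app a' b' :=
  IA.app_le_of (ha.trans (IA.le_imp_app a' b')) hb

theorem app_mem {a b : A} (ha : a ∈ IA.Sig) (hb : b ∈ IA.Sig) :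
    IA.app a b ∈ IA.Sig :=
  IA.Sig_mp (IA.Sig_upward ha (IA.le_imp_app a b)) hb

theorem lam_le {f : A → A} {X Y : A} (h : f X ≤ Y) : IA.lam f ≤ IA.imp X Y :=
  (iInf_le _ X).trans (IA.imp_monotone h)

theorem lam_le_iInf {ι : Sort*} {f : A → A} {X Y : ι → A}
    (h : ∀ i, f (X i) ≤ Y i) : IA.lam f ≤ ⨅ i, IA.imp (X i) (Y i) :=
  le_iInf fun i => IA.lam_le (h i)

theorem app_lam_le (f : A → A) (a : A) : IA.app (IA.lam f) a ≤ f a :=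
  IA.app_le (iInf_le _ a)

theorem lam_mono {f g : A → A} (h : ∀ a, f a ≤ g a) : IA.lam f ≤ IA.lam g :=
  iInf_mono fun a => IA.imp_monotone (h a)

/-- The `K` combinator. -/
def Kc : A := ⨅ a : A, ⨅ b : A, IA.imp a (IA.imp b a)

/-- The `S` combinator. -/
def Sc : A := ⨅ a : A, ⨅ b : A, ⨅ c : A,
  IA.imp (IA.imp a (IA.imp b c)) (IA.imp (IA.imp a b) (IA.imp a c))

theorem Kc_mem : IA.Kc ∈ IA.Sig := IA.Sig_K

theorem Sc_mem : IA.Sc ∈ IA.Sig := IA.Sig_S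

theorem Kc_le (a b : A) : IA.Kc ≤ IA.imp a (IA.imp b a) :=
  (iInf_le _ a).trans (iInf_le _ b)

theorem Sc_le (a b c : A) :
    IA.Sc ≤ IA.imp (IA.imp a (IA.imp b c)) (IA.imp (IA.imp a b) (IA.imp a c)) :=
  ((iInf_le _ a).trans (iInf_le _ b)).trans (iInf_le _ c)

end ImplicativeAlgebra
end Dev
section Dev2

/-- Untyped λ-terms with constants from `A`, de Bruijn indices and `K`, `S` combinators. -/
inductive Tm (A : Type u) : Type u
  | var : ℕ → Tm A
  | app : Tm A → Tm A → Tm A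
  | lam : Tm A → Tm A
  | cst : A → Tm A
  | K : Tm A
  | S : Tm A

set_option linter.unusedSectionVars false
namespace Tm

variable {A : Type u}

/-- Extend an environment (de Bruijn: new variable gets index `0`). -/
def ext (e : ℕ → A) (a : A) : ℕ → A
  | 0 => a
  | k + 1 => e k

@[simp] theorem ext_zero (e : ℕ → A) (a : A) : ext e a 0 = a := rfl
@[simp] theorem ext_succ (e : ℕ → A) (a : A) (k : ℕ) : ext e a (k + 1) = e k := rfl

/-- Lam-free terms. -/
def CL : Tm A → Prop
  | .var _ => True
  | .app t u => CL t ∧ CL u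
  | .lam _ => False
  | .cst _ => True
  | .K => True
  | .S => True

variable [CompleteLattice A]

/-- Constants belong to the separator. -/
def Good (IA : ImplicativeAlgebra A) : Tm A → Prop
  | .var _ => True
  | .app t u => Good IA t ∧ Good IA u
  | .lam t => Good IA t
  | .cst a => a ∈ IA.Sig
  | .K => True
  | .S => True

/-- Denotation of a term in an environment. -/
noncomputable def denot (IA : ImplicativeAlgebra A) : Tm A → (ℕ → A) → A
  | .var k, e => e k
  | .app t u, e => IA.app (denot IA t e) (denot IA u e)
  | .lam t, e => IA.lam fun a => denot IA t (ext e a)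
  | .cst a, _ => a
  | .K, _ => IA.Kc
  | .S, _ => IA.Sc

/-- Bracket abstraction of the variable `0`. -/
def bracket : Tm A → Tm A
  | .var 0 => .app (.app .S .K) .K
  | .var (k + 1) => .app .K (.var k)
  | .app t u => .app (.app .S (bracket t)) (bracket u)
  | t => .app .K t

/-- Compile away all λ-abstractions. -/
def comp : Tm A → Tm A
  | .var k => .var k
  | .app t u => .app (comp t) (comp u)
  | .lam t => bracket (comp t)
  | .cst a => .cst a
  | .K => .K
  | .S => .S

variable (IA : ImplicativeAlgebra A)

theorem skk_le (a : A) : IA.app (IA.app IA.Sc IA.Kc) IA.Kc ≤ IA.imp a a := by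
  have h1 : IA.app IA.Sc IA.Kc ≤ IA.imp (IA.imp a (IA.imp a a)) (IA.imp a a) :=
    IA.app_le_of (IA.Sc_le a (IA.imp a a) a) (IA.Kc_le a (IA.imp a a))
  exact IA.app_le_of h1 (IA.Kc_le a a)

theorem appK_le {t b : A} (a : A) (h : t ≤ b) : IA.app IA.Kc t ≤ IA.imp a b :=
  IA.app_le_of (IA.Kc_le b a) h

theorem bracket_le (t : Tm A) (ht : t.CL) (e : ℕ → A) :
    denot IA (bracket t) e ≤ IA.lam fun a => denot IA t (ext e a) := by
  induction t with
  | var k =>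
    cases k with
    | zero =>
      refine le_iInf fun a => ?_
      simpa [denot, bracket] using (skk_le IA a)
    | succ k =>
      refine le_iInf fun a => ?_
      simpa [denot, bracket] using appK_le IA a (le_refl (e k))
  | app t u iht ihu =>
    refine le_iInf fun a => ?_
    have hF : denot IA (bracket t) e ≤
        IA.imp a (denot IA t (ext e a)) := (iht ht.1).trans (iInf_le _ a)
    have hG : denot IA (bracket u) e ≤
        IA.imp a (denot IA u (ext e a)) := (ihu ht.2).trans (iInf_le _ a)
    show IA.app (IA.app IA.Sc (denot IA (bracket t) e)) (denot IA (bracket u) e) ≤ _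
    refine IA.app_le_of (IA.app_le_of (IA.Sc_le a (denot IA u (ext e a))
      (IA.app (denot IA t (ext e a)) (denot IA u (ext e a)))) ?_) hG
    exact hF.trans (IA.imp_monotone (IA.le_imp_app _ _))
  | lam t ih => exact absurd ht id
  | cst a => exact le_iInf fun b => appK_le IA b le_rfl
  | K => exact le_iInf fun b => appK_le IA b le_rfl
  | S => exact le_iInf fun b => appK_le IA b le_rfl

theorem bracket_CL (t : Tm A) (ht : t.CL) : (bracket t).CL := by
  induction t with
  | var k => cases k <;> trivial
  | app t u iht ihu => exact ⟨⟨trivial, iht ht.1⟩, ihu ht.2⟩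
  | lam t ih => exact absurd ht id
  | cst a => trivial
  | K => trivial
  | S => trivial

theorem bracket_Good (t : Tm A) (ht : t.Good IA) : (bracket t).Good IA := by
  induction t with
  | var k => cases k <;> trivial
  | app t u iht ihu => exact ⟨⟨trivial, iht ht.1⟩, ihu ht.2⟩
  | lam t ih => exact ⟨trivial, ht⟩
  | cst a => exact ⟨trivial, ht⟩
  | K => trivial
  | S => trivial

theorem comp_CL (t : Tm A) : (comp t).CL := by
  induction t with
  | var k => trivial
  | app t u iht ihu => exact ⟨iht, ihu⟩
  | lam t ih => exact bracket_CL _ ih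
  | cst a => trivial
  | K => trivial
  | S => trivial

theorem comp_Good (t : Tm A) (ht : t.Good IA) : (comp t).Good IA := by
  induction t with
  | var k => trivial
  | app t u iht ihu => exact ⟨iht ht.1, ihu ht.2⟩
  | lam t ih => exact bracket_Good IA _ (ih ht)
  | cst a => exact ht
  | K => trivial
  | S => trivial

set_option linter.unusedSectionVars false in
theorem comp_le (t : Tm A) (e : ℕ → A) : denot IA (comp t) e ≤ denot IA t e := by
  induction t generalizing e with
  | var k => exact le_rfl
  | app t u iht ihu => exact IA.app_mono (iht e) (ihu e)
  | lam t ih =>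
    refine (bracket_le IA (comp t) (comp_CL t) e).trans ?_
    exact IA.lam_mono fun a => ih (ext e a)
  | cst a => exact le_rfl
  | K => exact le_rfl
  | S => exact le_rfl

theorem denot_mem (t : Tm A) (ht : t.CL) (hg : t.Good IA) (e : ℕ → A)
    (he : ∀ k, e k ∈ IA.Sig) : denot IA t e ∈ IA.Sig := by
  induction t with
  | var k => exact he k
  | app t u iht ihu => exact IA.app_mem (iht ht.1 hg.1) (ihu ht.2 hg.2)
  | lam t ih => exact absurd ht id
  | cst a => exact hg
  | K => exact IA.Kc_mem
  | S => exact IA.Sc_mem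

/-- Adequacy: every term with constants in the separator has a witness in the
separator below its denotation. -/
theorem adequacy (t : Tm A) (hg : t.Good IA) (e : ℕ → A) (he : ∀ k, e k ∈ IA.Sig) :
    ∃ c ∈ IA.Sig, c ≤ denot IA t e :=
  ⟨denot IA (comp t) e, denot_mem IA _ (comp_CL t) (comp_Good IA t hg) e he,
    comp_le IA t e⟩

end Tm
end Dev2
section Dev3
namespace ImplicativeAlgebra

variable {A : Type u} [CompleteLattice A] (IA : ImplicativeAlgebra A)

/-- The Turing fixpoint combinator `λx y. y (x x y)`. -/
def turingTm : Tm A :=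
  .lam (.lam (.app (.var 0) (.app (.app (.var 1) (.var 1)) (.var 0))))

/-- Fixpoint induction: if `g ∈ Σ` sends realizers of all `P j` for `j` of smaller rank
to a realizer of `P i`, then some element of `Σ` realizes every `P i`. -/
theorem fix_realize {ι : Sort*} (rk : ι → Ordinal.{v}) (P : ι → A) (g : A)
    (hg : g ∈ IA.Sig)
    (hstep : ∀ i, g ≤ IA.imp (⨅ j : {j : ι // rk j < rk i}, P j.1) (P i)) :
    ∃ t ∈ IA.Sig, ∀ i, t ≤ P i := by
  obtain ⟨c, hc, hcle⟩ := Tm.adequacy IA (turingTm (A := A)) (by simp [turingTm, Tm.Good])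
    (fun _ => IA.Kc) (fun _ => IA.Kc_mem)
  set t := IA.app (IA.app c c) g with ht
  have htmem : t ∈ IA.Sig := IA.app_mem (IA.app_mem hc hc) hg
  have hcc : IA.app c c ≤ IA.lam fun y => IA.app y (IA.app (IA.app c c) y) := by
    have h1 : c ≤ IA.lam fun x => IA.lam fun y =>
        IA.app y (IA.app (IA.app x x) y) := by
      refine hcle.trans ?_
      simp only [Tm.denot, turingTm, Tm.ext_zero, Tm.ext_succ]
      exact le_rfl
    exact (IA.app_mono h1 le_rfl).trans (IA.app_lam_le _ c)
  have hunf : t ≤ IA.app g t := by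
    have := (IA.app_mono hcc (le_refl g)).trans (IA.app_lam_le _ g)
    exact this
  refine ⟨t, htmem, ?_⟩
  have main : ∀ o : Ordinal.{v}, ∀ i, rk i = o → t ≤ P i := by
    intro o
    induction o using Ordinal.induction with
    | h o IH =>
      rintro i rfl
      refine hunf.trans (IA.app_le_of (hstep i) (le_iInf fun j => ?_))
      exact IH (rk j.1) j.2 j.1 rfl
  exact fun i => main (rk i) i rfl

end ImplicativeAlgebra
end Dev3
section Dev4
namespace ImplicativeAlgebra

variable {A : Type u} [CompleteLattice A] (IA : ImplicativeAlgebra A)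

/-- Pairing: a realizer of `a × b` from realizers of `a` and `b`. -/
theorem pair_le {a b c d : A} (hc : c ≤ a) (hd : d ≤ b) :
    (IA.lam fun p => IA.app (IA.app p c) d) ≤ IA.times a b :=
  le_iInf fun x => IA.lam_le (IA.app_le_of (IA.app_le_of le_rfl hc) hd)

/-- First projection. -/
theorem fst_le {e a b : A} (he : e ≤ IA.times a b) :
    IA.app e (IA.lam fun x => IA.lam fun _ => x) ≤ a :=
  IA.app_le_of (he.trans (iInf_le _ a)) (IA.lam_le (IA.lam_le le_rfl))

/-- Second projection. -/
theorem snd_le {e a b : A} (he : e ≤ IA.times a b) :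
    IA.app e (IA.lam fun _ => IA.lam fun y => y) ≤ b := by
  refine IA.app_le_of (he.trans (iInf_le _ b)) (IA.lam_le ?_)
  exact IA.lam_le le_rfl

theorem eqW_mk {ι₁ ι₂ : Type u} (f₁ : ι₁ → PreW A) (v₁ : ι₁ → A)
    (f₂ : ι₂ → PreW A) (v₂ : ι₂ → A) :
    IA.eqW ⟨ι₁, f₁, v₁⟩ ⟨ι₂, f₂, v₂⟩ =
      IA.times
        (⨅ t, IA.imp (v₁ t) (IA.aex fun s => IA.times (v₂ s) (IA.eqW (f₂ s) (f₁ t))))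
        (⨅ t, IA.imp (v₂ t) (IA.aex fun s => IA.times (v₁ s) (IA.eqW (f₁ s) (f₂ t)))) := by
  rw [ImplicativeAlgebra.eqW.eq_def]

/-- Step term for the reflexivity fixpoint:
`λ r p. p c c` where `c = λ a k. k (λ q. q a r)`. -/
def reflTm : Tm A :=
  .lam (.lam (.app (.app (.var 0)
      (.lam (.lam (.app (.var 0) (.lam (.app (.app (.var 0) (.var 2)) (.var 4)))))))
      (.lam (.lam (.app (.var 0) (.lam (.app (.app (.var 0) (.var 2)) (.var 4))))))))

theorem refl_realize : ∃ r ∈ IA.Sig, ∀ x : PreW A, r ≤ IA.eqW x x := by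
  obtain ⟨c, hc, hcle⟩ := Tm.adequacy IA (reflTm (A := A))
    (by simp [reflTm, Tm.Good]) (fun _ => IA.Kc) (fun _ => IA.Kc_mem)
  refine IA.fix_realize PreW.rank (fun x => IA.eqW x x) c hc ?_
  intro x
  refine hcle.trans ?_
  have hd : Tm.denot IA (reflTm (A := A)) (fun _ => IA.Kc) =
      IA.lam fun r => IA.lam fun p =>
        IA.app (IA.app p
          (IA.lam fun a => IA.lam fun k =>
            IA.app k (IA.lam fun q => IA.app (IA.app q a) r)))
          (IA.lam fun a => IA.lam fun k =>
            IA.app k (IA.lam fun q => IA.app (IA.app q a) r)) := by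
    simp [reflTm, Tm.denot]
  rw [hd]
  obtain ⟨ι, f, v⟩ := x
  refine IA.lam_le ?_
  show _ ≤ (fun x => IA.eqW x x) (PreW.mk ι f v)
  show _ ≤ IA.eqW (PreW.mk ι f v) (PreW.mk ι f v)
  rw [IA.eqW_mk]
  refine IA.pair_le ?_ ?_ <;>
  · refine IA.lam_le_iInf fun t => ?_
    rw [ImplicativeAlgebra.aex]
    refine le_iInf fun z => IA.lam_le ?_
    refine IA.app_le_of (iInf_le _ t) ?_
    refine IA.pair_le le_rfl ?_
    exact iInf_le (fun j : {y : PreW A // y.rank < (PreW.mk ι f v).rank} =>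
      IA.eqW j.1 j.1) ⟨f t, PreW.rank_lt_mk f v t⟩

end ImplicativeAlgebra
end Dev4
section Dev5
namespace ImplicativeAlgebra

variable {A : Type u} [CompleteLattice A] (IA : ImplicativeAlgebra A)

theorem aex_le {ι : Sort*} (f : ι → A) (x : A) :
    IA.aex f ≤ IA.imp (⨅ i, IA.imp (f i) x) x := iInf_le _ x

theorem times_le (a b x : A) :
    IA.times a b ≤ IA.imp (IA.imp a (IA.imp b x)) x := iInf_le _ x

theorem nadd3_lt {a b c a' b' c' : Ordinal.{u}} (h1 : a < a') (h2 : b < b')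
    (h3 : c < c') : a ♯ (b ♯ c) < a' ♯ (b' ♯ c') :=
  max_lt (lt_of_lt_of_le h1 (le_max_left _ _)) (max_lt
    (lt_of_lt_of_le h2 ((le_max_left _ _).trans (le_max_right _ _)))
    (lt_of_lt_of_le h3 ((le_max_right _ _).trans (le_max_right _ _))))

theorem nadd3_perm (a b c : Ordinal.{u}) : c ♯ (b ♯ a) = a ♯ (b ♯ c) := by
  rw [max_comm c, max_comm b a, max_assoc]

/-- `λx y. x` -/
def tmKT : Tm A := .lam (.lam (.var 1))
/-- `λx y. y` -/
def tmKF : Tm A := .lam (.lam (.var 0))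

/-- `λ p'. p' z1 (T z2 w2)` (indices relative to the context of `transTm`). -/
def tmP5 : Tm A :=
  .lam (.app (.app (.var 0) (.var 2)) (.app (.app (.var 12) (.var 1)) (.var 4)))

/-- `λ qq. qq (λ z1 z2. k (tmP5))` -/
def tmH3 : Tm A := .lam (.app (.var 0) (.lam (.lam (.app (.var 6) tmP5))))

/-- first component of the transitivity pair -/
def tmC1ac : Tm A :=
  .lam (.lam (.app (.app (.app (.var 4) tmKT) (.var 1))
    (.lam (.app (.var 0)
      (.lam (.lam (.app (.app (.app (.var 6) tmKT) (.var 1)) tmH3)))))))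

/-- second component of the transitivity pair -/
def tmC1ca : Tm A :=
  .lam (.lam (.app (.app (.app (.var 3) tmKF) (.var 1))
    (.lam (.app (.var 0)
      (.lam (.lam (.app (.app (.app (.var 7) tmKF) (.var 1)) tmH3)))))))

/-- Step term for the transitivity fixpoint: `λ T e1 e2 p. p C1ac C1ca`. -/
def transTm : Tm A :=
  .lam (.lam (.lam (.lam (.app (.app (.var 0) tmC1ac) tmC1ca))))

theorem trans_realize : ∃ T ∈ IA.Sig, ∀ a b c : PreW A,
    T ≤ IA.imp (IA.eqW a b) (IA.imp (IA.eqW b c) (IA.eqW a c)) := by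
  obtain ⟨t0, ht0, hle⟩ := Tm.adequacy IA (transTm (A := A))
    (by simp [transTm, tmC1ac, tmC1ca, tmH3, tmP5, tmKT, tmKF, Tm.Good])
    (fun _ => IA.Kc) (fun _ => IA.Kc_mem)
  have hstep : ∀ i : PreW A × PreW A × PreW A,
      t0 ≤ IA.imp
        (⨅ j : {j : PreW A × PreW A × PreW A //
            j.1.rank ♯ (j.2.1.rank ♯ j.2.2.rank) <
              i.1.rank ♯ (i.2.1.rank ♯ i.2.2.rank)},
          IA.imp (IA.eqW j.1.1 j.1.2.1)
            (IA.imp (IA.eqW j.1.2.1 j.1.2.2) (IA.eqW j.1.1 j.1.2.2)))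
        (IA.imp (IA.eqW i.1 i.2.1)
          (IA.imp (IA.eqW i.2.1 i.2.2) (IA.eqW i.1 i.2.2))) := by
    rintro ⟨a, b, c⟩
    refine hle.trans ?_
    simp only [transTm, tmC1ac, tmC1ca, tmH3, tmP5, tmKT, tmKF, Tm.denot,
      Tm.ext_zero, Tm.ext_succ]
    obtain ⟨ιa, fa, va⟩ := a
    obtain ⟨ιb, fb, vb⟩ := b
    obtain ⟨ιc, fc, vc⟩ := c
    refine IA.lam_le ?_
    show _ ≤ IA.imp (IA.eqW (PreW.mk ιa fa va) (PreW.mk ιb fb vb))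
      (IA.imp (IA.eqW (PreW.mk ιb fb vb) (PreW.mk ιc fc vc))
        (IA.eqW (PreW.mk ιa fa va) (PreW.mk ιc fc vc)))
    simp only [IA.eqW_mk]
    refine IA.lam_le ?_
    refine IA.lam_le ?_
    refine IA.pair_le ?_ ?_
    · -- first component: ⊆ direction, `Pac`
      refine IA.lam_le_iInf fun t => ?_
      rw [ImplicativeAlgebra.aex]
      refine le_iInf fun x0 => IA.lam_le ?_
      refine IA.app_le_of
        ((IA.app_le_of ((IA.fst_le le_rfl).trans (iInf_le _ t)) le_rfl).trans
          (IA.aex_le _ x0)) ?_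
      refine IA.lam_le_iInf fun s => ?_
      refine IA.app_le_of (IA.times_le _ _ x0) ?_
      refine IA.lam_le ?_
      refine IA.lam_le ?_
      refine IA.app_le_of
        ((IA.app_le_of ((IA.fst_le le_rfl).trans (iInf_le _ s)) le_rfl).trans
          (IA.aex_le _ x0)) ?_
      refine IA.lam_le_iInf fun s' => ?_
      refine IA.app_le_of (IA.times_le _ _ x0) ?_
      refine IA.lam_le ?_
      refine IA.lam_le ?_
      refine IA.app_le_of (iInf_le _ s') ?_
      refine IA.pair_le le_rfl ?_
      refine IA.app_le_of (IA.app_le_of ?_ le_rfl) le_rfl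
      have hmem := iInf_le (fun j : {j : PreW A × PreW A × PreW A //
          j.1.rank ♯ (j.2.1.rank ♯ j.2.2.rank) <
            (PreW.mk ιa fa va).rank ♯
              ((PreW.mk ιb fb vb).rank ♯ (PreW.mk ιc fc vc).rank)} =>
        IA.imp (IA.eqW j.1.1 j.1.2.1)
          (IA.imp (IA.eqW j.1.2.1 j.1.2.2) (IA.eqW j.1.1 j.1.2.2)))
        ⟨(fc s', fb s, fa t), by
          rw [nadd3_perm (fa t).rank (fb s).rank (fc s').rank]
          exact nadd3_lt (PreW.rank_lt_mk fa va t) (PreW.rank_lt_mk fb vb s)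
            (PreW.rank_lt_mk fc vc s')⟩
      exact hmem
    · -- second component: ⊇ direction, `Pca`
      refine IA.lam_le_iInf fun t => ?_
      rw [ImplicativeAlgebra.aex]
      refine le_iInf fun x0 => IA.lam_le ?_
      refine IA.app_le_of
        ((IA.app_le_of ((IA.snd_le le_rfl).trans (iInf_le _ t)) le_rfl).trans
          (IA.aex_le _ x0)) ?_
      refine IA.lam_le_iInf fun s => ?_
      refine IA.app_le_of (IA.times_le _ _ x0) ?_
      refine IA.lam_le ?_
      refine IA.lam_le ?_
      refine IA.app_le_of
        ((IA.app_le_of ((IA.snd_le le_rfl).trans (iInf_le _ s)) le_rfl).trans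
          (IA.aex_le _ x0)) ?_
      refine IA.lam_le_iInf fun s' => ?_
      refine IA.app_le_of (IA.times_le _ _ x0) ?_
      refine IA.lam_le ?_
      refine IA.lam_le ?_
      refine IA.app_le_of (iInf_le _ s') ?_
      refine IA.pair_le le_rfl ?_
      refine IA.app_le_of (IA.app_le_of ?_ le_rfl) le_rfl
      have hmem := iInf_le (fun j : {j : PreW A × PreW A × PreW A //
          j.1.rank ♯ (j.2.1.rank ♯ j.2.2.rank) <
            (PreW.mk ιa fa va).rank ♯
              ((PreW.mk ιb fb vb).rank ♯ (PreW.mk ιc fc vc).rank)} =>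
        IA.imp (IA.eqW j.1.1 j.1.2.1)
          (IA.imp (IA.eqW j.1.2.1 j.1.2.2) (IA.eqW j.1.1 j.1.2.2)))
        ⟨(fa s', fb s, fc t), by
          exact nadd3_lt (PreW.rank_lt_mk fa va s') (PreW.rank_lt_mk fb vb s)
            (PreW.rank_lt_mk fc vc t)⟩
      exact hmem
  obtain ⟨T, hT, hTle⟩ := IA.fix_realize
    (ι := PreW A × PreW A × PreW A)
    (fun x => x.1.rank ♯ (x.2.1.rank ♯ x.2.2.rank))
    (fun x => IA.imp (IA.eqW x.1 x.2.1)
      (IA.imp (IA.eqW x.2.1 x.2.2) (IA.eqW x.1 x.2.2)))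
    t0 ht0 hstep
  exact ⟨T, hT, fun a b c => hTle (a, b, c)⟩

end ImplicativeAlgebra
end Dev5
section Dev6
namespace ImplicativeAlgebra

variable {A : Type u} [CompleteLattice A] (IA : ImplicativeAlgebra A) {κ : Cardinal.{u}}

theorem interp_sub (v : Fin 2 → WSet A κ) :
    IA.interp κ (SetFormula.all ((SetFormula.mem 2 0).imp (SetFormula.mem 2 1))) v
    = ⨅ γ : WSet A κ, IA.imp (IA.memW γ.1 (v 0).1) (IA.memW γ.1 (v 1).1) := by
  simp only [ImplicativeAlgebra.interp, Fin.snoc]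
  norm_num
  congr 1

/-- Realizer for `F → (x ⊆ y)`. -/
def subTmA (r : A) : Tm A :=
  .lam (.lam (.app (.var 1)
    (.lam (.app (.var 0) (.lam (.app (.app (.var 0) (.var 2)) (.cst r)))))))

/-- Realizer for `(x ⊆ y) → F`. -/
def subTmB (T : A) : Tm A :=
  .lam (.lam (.lam (.app (.var 1)
    (.lam (.app (.var 0)
      (.lam (.lam (.app (.app (.var 5) (.var 1))
        (.lam (.app (.var 0)
          (.lam (.lam (.app (.var 6)
            (.lam (.app (.app (.var 0) (.var 2))
              (.app (.app (.cst T) (.var 1)) (.var 4)))))))))))))))))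

theorem main_A :
    IA.SigLe
      (fun v : Fin 2 → WSet A κ =>
        IA.interp κ (SetFormula.all ((SetFormula.mem 2 0).imp (SetFormula.mem 2 1))) v)
      (fun v : Fin 2 → WSet A κ => IA.subW (v 0).1 (v 1).1) := by
  obtain ⟨r, hr, hrle⟩ := IA.refl_realize
  obtain ⟨cA, hcA, hle⟩ := Tm.adequacy IA (subTmA r)
    (by simp [subTmA, Tm.Good, hr]) (fun _ => IA.Kc) (fun _ => IA.Kc_mem)
  refine IA.Sig_upward hcA (hle.trans ?_)
  simp only [subTmA, Tm.denot, Tm.ext_zero, Tm.ext_succ]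
  refine le_iInf fun v => ?_
  rw [IA.interp_sub]
  refine IA.lam_le ?_
  refine IA.lam_le_iInf fun t => ?_
  refine IA.app_le_of
    (iInf_le (fun γ : WSet A κ => IA.imp (IA.memW γ.1 (v 0).1) (IA.memW γ.1 (v 1).1))
      (WSet.fam (v 0) t)) ?_
  refine le_iInf fun x0 => IA.lam_le ?_
  refine IA.app_le_of (iInf_le _ t) ?_
  exact IA.pair_le le_rfl (hrle ((v 0).1.fam t))

theorem main_B :
    IA.SigLe
      (fun v : Fin 2 → WSet A κ => IA.subW (v 0).1 (v 1).1)
      (fun v : Fin 2 → WSet A κ =>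
        IA.interp κ (SetFormula.all ((SetFormula.mem 2 0).imp (SetFormula.mem 2 1))) v) := by
  obtain ⟨T, hT, hTle⟩ := IA.trans_realize
  obtain ⟨cB, hcB, hle⟩ := Tm.adequacy IA (subTmB T)
    (by simp [subTmB, Tm.Good, hT]) (fun _ => IA.Kc) (fun _ => IA.Kc_mem)
  refine IA.Sig_upward hcB (hle.trans ?_)
  simp only [subTmB, Tm.denot, Tm.ext_zero, Tm.ext_succ]
  refine le_iInf fun v => ?_
  rw [IA.interp_sub]
  refine IA.lam_le ?_
  refine IA.lam_le_iInf fun γ' => ?_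
  refine le_iInf fun x0 => IA.lam_le ?_
  refine IA.app_le_of (IA.aex_le _ x0) ?_
  refine IA.lam_le_iInf fun t => ?_
  refine IA.app_le_of (IA.times_le _ _ x0) ?_
  refine IA.lam_le ?_
  refine IA.lam_le ?_
  refine IA.app_le_of
    ((IA.app_le_of (iInf_le _ t) le_rfl).trans (IA.aex_le _ x0)) ?_
  refine IA.lam_le_iInf fun s => ?_
  refine IA.app_le_of (IA.times_le _ _ x0) ?_
  refine IA.lam_le ?_
  refine IA.lam_le ?_
  refine IA.app_le_of (iInf_le _ s) ?_
  refine IA.pair_le le_rfl ?_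
  exact IA.app_le_of (IA.app_le_of (hTle ((v 1).1.fam s) ((v 0).1.fam t) γ'.1) le_rfl) le_rfl

end ImplicativeAlgebra
end Dev6


theorem stmt10 {A : Type u} [CompleteLattice A] (IA : ImplicativeAlgebra A)
    (κ : Cardinal.{u}) (hκ : κ.IsInaccessible) (hA : Cardinal.mk A < κ) :
    IA.SigEquiv
      (fun v : Fin 2 → WSet A κ =>
        IA.interp κ (SetFormula.all ((SetFormula.mem 2 0).imp (SetFormula.mem 2 1))) v)
      (fun v : Fin 2 → WSet A κ => IA.subW (v 0).1 (v 1).1) := by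
  exact ⟨IA.main_A, IA.main_B⟩
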